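/- Let p be a prime and b, d natural numbers with b < d+1. Let t_2, t_3 be natural numbers whose base-p digits in positions 0,...,b-1 all equal p-1 and such that the b-th digit of t_2 or of t_3 is different from p-1. Then p divides C(t_2 + s, s)·C(t_3 + t, t) for all (s,t) with s + t = p^{d'} and d' < b, and there exist (s,t) with s + t = p^b for which p does not divide C(t_2 + s, s)·C(t_3 + t, t); moreover such a pair can be taken with (s,t) = (p^b, 0) or (0, p^b). -/

import Mathlib

open Nat Finset

/-- Kummer criterion: `p` divides `C(n+k,k)` iff there is a carry when adding
`k` and `n` in base `p`. -/
lemma kummer_iff_aux19 {p : ℕ} (hp : p.Prime) (n k : ℕ) :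
    p ∣ (n + k).choose k ↔ ∃ i, 0 < i ∧ p ^ i ≤ k % p ^ i + n % p ^ i := by
  conv_lhs => rw [← pow_one p]
  rw [pow_dvd_iff_le_emultiplicity,
    Nat.Prime.emultiplicity_choose' hp (Nat.lt_succ_self (Nat.log p (n + k))),
    Nat.cast_le, Nat.one_le_iff_ne_zero, Ne, Finset.card_eq_zero, ← Ne,
    ← Finset.nonempty_iff_ne_empty]
  constructor
  · rintro ⟨i, hi⟩
    simp only [mem_filter, mem_Ico] at hi
    exact ⟨i, by omega, hi.2⟩
  · rintro ⟨i, hi, hle⟩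
    refine ⟨i, ?_⟩
    simp only [mem_filter, mem_Ico]
    have h1 : p ^ i ≤ n + k := le_trans hle (by
      have := Nat.mod_le k (p ^ i); have := Nat.mod_le n (p ^ i); omega)
    have hnk : n + k ≠ 0 := by
      intro h
      have : 0 < p ^ i := pow_pos hp.pos i
      omega
    have := (Nat.le_log_iff_pow_le hp.one_lt hnk).mpr h1
    exact ⟨⟨hi, by omega⟩, hle⟩

/-- If all the digits of `n` below position `i` are `p-1`, then `n % p^i = p^i - 1`. -/
lemma mod_full_digits_aux19 {p : ℕ} (hp : 1 < p) (n : ℕ) :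
    ∀ i : ℕ, (∀ j, j < i → n / p ^ j % p = p - 1) → n % p ^ i = p ^ i - 1 := by
  intro i
  induction i with
  | zero => simp [Nat.mod_one]
  | succ i ih =>
    intro h
    have key : n % p ^ (i + 1) = p ^ i * (n / p ^ i % p) + n % p ^ i := by
      conv_lhs => rw [pow_succ]
      conv_lhs => rw [← Nat.div_add_mod (n % (p ^ i * p)) (p ^ i)]
      rw [Nat.mod_mul_right_div_self, Nat.mod_mod_of_dvd _ (dvd_mul_right _ _)]
    rw [key, ih (fun j hj => h j (by omega)), h i (by omega)]
    have h3 : p ^ i * (p - 1) = p ^ (i + 1) - p ^ i := by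
      rw [Nat.mul_sub, mul_one, ← pow_succ]
    rw [h3]
    have h1 : 1 ≤ p ^ i := Nat.one_le_pow _ _ (by omega)
    have h2 : p ^ i ≤ p ^ (i + 1) := Nat.pow_le_pow_right (by omega) (by omega)
    omega

/-- If the digits of `t` below position `b` are all `p-1` and `0 < s ≤ p^{d'}` with
`d' < b`, then adding `s` to `t` produces a carry, so `p ∣ C(t+s, s)`. -/
lemma dvd_choose_aux19 {p b : ℕ} (hp : p.Prime) {t s d' : ℕ}
    (hdig : ∀ i, i < b → t / p ^ i % p = p - 1) (hs : 0 < s) (hsb : s ≤ p ^ d')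
    (hd : d' < b) : p ∣ (t + s).choose s := by
  rw [kummer_iff_aux19 hp]
  set i := Nat.log p s + 1 with hi
  have hlog : Nat.log p s ≤ d' := by
    calc Nat.log p s ≤ Nat.log p (p ^ d') := Nat.log_mono_right hsb
    _ = d' := Nat.log_pow hp.one_lt d'
  have hmod_t : t % p ^ i = p ^ i - 1 :=
    mod_full_digits_aux19 hp.one_lt t i (fun j hj => hdig j (by omega))
  have hs_lt : s < p ^ i := Nat.lt_pow_succ_log_self hp.one_lt s
  refine ⟨i, by omega, ?_⟩
  rw [Nat.mod_eq_of_lt hs_lt, hmod_t]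
  have : 1 ≤ p ^ i := Nat.one_le_pow _ _ hp.pos
  omega

/-- `(p^k - 1) % p = p - 1` for `k ≥ 1`. -/
lemma pred_pow_mod_aux19 {p k : ℕ} (hp : 2 ≤ p) (hk : 0 < k) : (p ^ k - 1) % p = p - 1 := by
  have h1 : 1 ≤ p ^ (k - 1) := Nat.one_le_pow _ _ (by omega)
  have h2 : p ^ k = p * p ^ (k - 1) := by
    rw [← _root_.pow_succ']; congr 1; omega
  have h3 : p ^ k - 1 = p * (p ^ (k - 1) - 1) + (p - 1) := by
    rw [Nat.mul_sub, mul_one]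
    have : p ≤ p * p ^ (k - 1) := Nat.le_mul_of_pos_right _ h1
    omega
  rw [h3, Nat.mul_add_mod, Nat.mod_eq_of_lt (by omega)]

/-- Arithmetic bound: if `m / B < P` and `m / B + 1 ≠ P` then `m + B < B * P`. -/
lemma bound_aux19 {B P m : ℕ} (hB : 0 < B) (hu : m / B < P) (hne : m / B + 1 ≠ P) :
    m + B < B * P := by
  have hdm := Nat.div_add_mod m B
  have hmod : m % B < B := Nat.mod_lt _ hB
  have hmul : B * (m / B + 2) ≤ B * P := Nat.mul_le_mul_left _ (by omega)
  rw [Nat.mul_add] at hmul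
  omega

/-- If the digit of `t` at position `b` is not `p-1`, there are no carries when adding
`p^b` to `t`, so `p ∤ C(t+p^b, p^b)`. -/
lemma not_dvd_choose_aux19 {p b t : ℕ} (hp : p.Prime) (hdig : t / p ^ b % p ≠ p - 1) :
    ¬ p ∣ (t + p ^ b).choose (p ^ b) := by
  rw [kummer_iff_aux19 hp]
  rintro ⟨i, hi, hle⟩
  rcases le_or_gt i b with hib | hbi
  · have h0 : p ^ b % p ^ i = 0 :=
      Nat.mod_eq_zero_of_dvd (pow_dvd_pow p hib)
    have h2 : t % p ^ i < p ^ i := Nat.mod_lt _ (pow_pos hp.pos i)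
    omega
  · have hpb_mod : p ^ b % p ^ i = p ^ b :=
      Nat.mod_eq_of_lt (Nat.pow_lt_pow_right hp.one_lt hbi)
    have hsplit : p ^ i = p ^ b * p ^ (i - b) := by rw [← pow_add]; congr 1; omega
    have hu_eq : t % p ^ i / p ^ b = t / p ^ b % p ^ (i - b) := by
      rw [hsplit, Nat.mod_mul_right_div_self]
    have hu_modp : t % p ^ i / p ^ b % p = t / p ^ b % p := by
      rw [hu_eq, Nat.mod_mod_of_dvd _ (dvd_pow_self p (by omega))]
    have hu_lt : t % p ^ i / p ^ b < p ^ (i - b) := by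
      rw [hu_eq]; exact Nat.mod_lt _ (pow_pos hp.pos _)
    have hP1 : 1 ≤ p ^ (i - b) := Nat.one_le_pow _ _ hp.pos
    have hne : t % p ^ i / p ^ b + 1 ≠ p ^ (i - b) := by
      intro h
      apply hdig
      rw [← hu_modp, show t % p ^ i / p ^ b = p ^ (i - b) - 1 by omega]
      exact pred_pow_mod_aux19 hp.two_le (by omega)
    have key : t % p ^ i + p ^ b < p ^ b * p ^ (i - b) :=
      bound_aux19 (pow_pos hp.pos b) hu_lt hne
    omega

/-- With all base-`p` digits of `t₂`, `t₃` in positions `0,…,b-1` equal to `p-1` and one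
of the `b`-th digits different from `p-1` (where `b < d+1`): `p` divides every product
`C(t₂+s,s)·C(t₃+t,t)` with `s+t = p^{d'}`, `d' < b`, and there is a pair `(s,t)`,
which may be taken to be `(p^b, 0)` or `(0, p^b)`, with `s + t = p^b` whose product
is not divisible by `p`. -/
theorem stmt_19 (p b d t₂ t₃ : ℕ) (hp : p.Prime) (hbd : b < d + 1)
    (h₂ : ∀ i : ℕ, i < b → t₂ / p ^ i % p = p - 1)
    (h₃ : ∀ i : ℕ, i < b → t₃ / p ^ i % p = p - 1)
    (hb : t₂ / p ^ b % p ≠ p - 1 ∨ t₃ / p ^ b % p ≠ p - 1) :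
    (∀ d' : ℕ, d' < b → ∀ s t : ℕ, s + t = p ^ d' →
        p ∣ Nat.choose (t₂ + s) s * Nat.choose (t₃ + t) t) ∧
      ∃ s t : ℕ, s + t = p ^ b ∧
        ¬ p ∣ Nat.choose (t₂ + s) s * Nat.choose (t₃ + t) t ∧
        ((s, t) = (p ^ b, 0) ∨ (s, t) = (0, p ^ b)) := by
  constructor
  · intro d' hd' s t hst
    have hppos : 0 < p ^ d' := pow_pos hp.pos _
    rcases Nat.eq_zero_or_pos s with hs | hs
    · subst hs
      have ht : t = p ^ d' := by omega
      exact Dvd.dvd.mul_left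
        (dvd_choose_aux19 hp h₃ (by omega) (le_of_eq ht) hd') _
    · exact Dvd.dvd.mul_right (dvd_choose_aux19 hp h₂ hs (by omega) hd') _
  · rcases hb with hb2 | hb3
    · exact ⟨p ^ b, 0, by simp, by simpa using not_dvd_choose_aux19 hp hb2, Or.inl rfl⟩
    · exact ⟨0, p ^ b, by simp, by simpa using not_dvd_choose_aux19 hp hb3, Or.inr rfl⟩
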